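/- Let D be a finite set of defaults. If the formula a has finite rank i with respect to D and (a,b) belongs to the lexicographic closure D^l of D, then b has a rank with respect to D and the rank of b is at most i. -/

import Mathlib

open Set

/-- A default is a pair `(a, b)` of formulas, a formula being a set of models. -/
abbrev Default (M : Type*) := Set M × Set M

variable {M : Type*}

/-- The model `m` violates the default `d = (a, b)` iff `m ∈ a \ b`. -/
def Violates (m : M) (d : Default M) : Prop := m ∈ d.1 \ d.2

/-- The formula `c` is consistent with `B̃`, the set of material counterparts of the
defaults in `B`, iff `c ∩ ⋂ B̃ ≠ ∅`. -/
def ConsistentWith (c : Set M) (B : Set (Default M)) : Prop :=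
  (c ∩ ⋂ d ∈ B, (d.1ᶜ ∪ d.2)).Nonempty

/-- `B̃, c ⊨ d` : every model of `c` together with all material counterparts of `B`
is a model of `d`. -/
def EntailsWith (B : Set (Default M)) (c d : Set M) : Prop :=
  c ∩ ⋂ e ∈ B, (e.1ᶜ ∪ e.2) ⊆ d

/-- The level of the model `m` : the number of defaults of `D` violated by `m`. -/
noncomputable def level (D : Set (Default M)) (m : M) : ℕ :=
  {d ∈ D | Violates m d}.ncard

/-- `F` is a maxbase of `D` for `c` : `F ⊆ D`, `c` is consistent with `F̃`, and no
subset of `D` of strictly larger cardinality has its material counterparts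
consistent with `c`. -/
def Maxbase (D : Set (Default M)) (c : Set M) (F : Set (Default M)) : Prop :=
  F ⊆ D ∧ ConsistentWith c F ∧
    ∀ F' : Set (Default M), F' ⊆ D → F.ncard < F'.ncard → ¬ ConsistentWith c F'

/-- `E₀ = D`, `E_{i+1} = {(a,b) ∈ E_i | a is not consistent with Ẽ_i}`. -/
def Ee (D : Set (Default M)) : ℕ → Set (Default M)
  | 0 => D
  | (i + 1) => {d ∈ Ee D i | ¬ ConsistentWith d.1 (Ee D i)}

/-- `c` has rank `i` with respect to `D` : `i` is the least natural number such that
`c` is consistent with `Ẽ_i`. -/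
def HasRank (D : Set (Default M)) (c : Set M) (i : ℕ) : Prop :=
  ConsistentWith c (Ee D i) ∧ ∀ j < i, ¬ ConsistentWith c (Ee D j)

/-- `D_i = E_i \ E_{i+1}`. -/
def Dlev (D : Set (Default M)) (i : ℕ) : Set (Default M) := Ee D i \ Ee D (i + 1)

/-- `D_∞ = ⋂_i E_i`. -/
def Dinf (D : Set (Default M)) : Set (Default M) := ⋂ i, Ee D i

/-- `k` is the order of `D` : the least `k` such that `D_i = ∅` for every finite `i ≥ k`. -/
def IsOrder (D : Set (Default M)) (k : ℕ) : Prop :=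
  (∀ i, k ≤ i → Dlev D i = ∅) ∧ ∀ k', (∀ i, k' ≤ i → Dlev D i = ∅) → k ≤ k'

/-- The `(k+1)`-tuple associated to `X ⊆ D` : `n₀ = |D_∞ ∩ X|` and
`n_i = |D_{k-i} ∩ X|` for `1 ≤ i ≤ k`. -/
noncomputable def tup (D : Set (Default M)) (k : ℕ) (X : Set (Default M)) (i : ℕ) : ℕ :=
  if i = 0 then (Dinf D ∩ X).ncard else (Dlev D (k - i) ∩ X).ncard

/-- The seriousness ordering : `X ≺ Y` iff the tuple of `X` is lexicographically
smaller than the tuple of `Y`. -/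
def Serious (D : Set (Default M)) (k : ℕ) (X Y : Set (Default M)) : Prop :=
  ∃ j ≤ k, (∀ i < j, tup D k X i = tup D k Y i) ∧ tup D k X j < tup D k Y j

/-- `V(m)` : the set of defaults of `D` violated by the model `m`. -/
def Vset (D : Set (Default M)) (m : M) : Set (Default M) := {d ∈ D | Violates m d}

/-- The lexicographic closure `D^l` : `(a,b) ∈ D^l` iff every model of `a` that is
`≺`-minimal among the models of `a` satisfies `b` (models being compared via the
seriousness ordering of the sets of defaults they violate). -/
def LexClos (D : Set (Default M)) (k : ℕ) (a b : Set M) : Prop :=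
  ∀ m ∈ a, (∀ m' ∈ a, ¬ Serious D k (Vset D m') (Vset D m)) → m ∈ b

/-- `B` is a basis for `a` : `B ⊆ D`, `a` is consistent with `B̃`, and there is no
`B' ⊆ D` whose material counterparts are consistent with `a` and with `B ≺ B'`. -/
def LexBasis (D : Set (Default M)) (k : ℕ) (a : Set M) (B : Set (Default M)) : Prop :=
  B ⊆ D ∧ ConsistentWith a B ∧
    ∀ B' : Set (Default M), B' ⊆ D → ConsistentWith a B' → ¬ Serious D k B B'

/-- The rational closure of `D` : the pairs `(a,b)` such that either `a` has no rank,
or the rank of `a` is strictly smaller than the rank of `a ∩ bᶜ` (where `no rank`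
counts as larger than every natural number). -/
def RatClos (D : Set (Default M)) (a b : Set M) : Prop :=
  (¬ ∃ i, HasRank D a i) ∨
    ∃ i, HasRank D a i ∧
      ((¬ ∃ j, HasRank D (a ∩ bᶜ) j) ∨ ∃ j, HasRank D (a ∩ bᶜ) j ∧ i < j)

/-- `ℓ(X) = l` : `l` is the least index `i ≤ k` with `tup X i ≠ 0`, and `l = k + 1`
if the tuple of `X` is all zero. -/
def EllIs (D : Set (Default M)) (k : ℕ) (X : Set (Default M)) (l : ℕ) : Prop :=
  (l ≤ k ∧ tup D k X l ≠ 0 ∧ ∀ i < l, tup D k X i = 0) ∨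
    (l = k + 1 ∧ ∀ i ≤ k, tup D k X i = 0)

/-- `X ≪ Y` iff `ℓ(X) > ℓ(Y)`. -/
def Ll (D : Set (Default M)) (k : ℕ) (X Y : Set (Default M)) : Prop :=
  ∃ lx ly, EllIs D k X lx ∧ EllIs D k Y ly ∧ ly < lx

lemma Ee_succ_subset (D : Set (Default M)) (i : ℕ) : Ee D (i+1) ⊆ Ee D i :=
  fun _ hd => hd.1

lemma Ee_antitone (D : Set (Default M)) : ∀ {i j : ℕ}, i ≤ j → Ee D j ⊆ Ee D i := by
  intro i j h
  induction j with
  | zero =>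
      have : i = 0 := Nat.le_zero.mp h
      subst this; exact subset_rfl
  | succ n ih =>
      rcases Nat.lt_or_ge i (n+1) with h' | h'
      · exact (Ee_succ_subset D n).trans (ih (Nat.lt_succ_iff.mp h'))
      · have : i = n + 1 := le_antisymm h h'
        subst this; exact subset_rfl

lemma Ee_subset_D (D : Set (Default M)) (i : ℕ) : Ee D i ⊆ D :=
  Ee_antitone D (Nat.zero_le i)

lemma Dlev_subset_D (D : Set (Default M)) (j : ℕ) : Dlev D j ⊆ D :=
  fun d hd => Ee_subset_D D j hd.1

lemma Dinf_subset_D (D : Set (Default M)) : Dinf D ⊆ D :=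
  fun d hd => mem_iInter.mp hd 0

lemma tup_le (D : Set (Default M)) (hD : D.Finite) (k : ℕ) (X : Set (Default M))
    (t : ℕ) : tup D k X t ≤ D.ncard := by
  unfold tup
  split
  · exact Set.ncard_le_ncard (inter_subset_left.trans (Dinf_subset_D D)) hD
  · exact Set.ncard_le_ncard (inter_subset_left.trans (Dlev_subset_D D _)) hD

lemma sum_lt_pow (B : ℕ) (f : ℕ → ℕ) (hf : ∀ t, f t < B) :
    ∀ n, ∑ t ∈ Finset.range n, f t * B ^ t < B ^ n := by
  intro n
  induction n with
  | zero => simp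
  | succ n ih =>
      rw [Finset.sum_range_succ, pow_succ]
      have h1 : f n + 1 ≤ B := hf n
      calc ∑ t ∈ Finset.range n, f t * B ^ t + f n * B ^ n
          < B ^ n + f n * B ^ n := by omega
        _ = (f n + 1) * B ^ n := by ring
        _ ≤ B * B ^ n := Nat.mul_le_mul_right _ h1
        _ = B ^ n * B := Nat.mul_comm _ _

lemma lex_sum (B : ℕ) (f g : ℕ → ℕ) (hf : ∀ t, f t < B) (n j : ℕ) (hj : j < n)
    (heq : ∀ t, j < t → t < n → f t = g t) (hlt : f j < g j) :
    ∑ t ∈ Finset.range n, f t * B ^ t < ∑ t ∈ Finset.range n, g t * B ^ t := by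
  have hsplit : ∀ h : ℕ → ℕ,
      ∑ t ∈ Finset.range n, h t * B ^ t
        = ∑ t ∈ Finset.range (j+1), h t * B ^ t
          + ∑ t ∈ Finset.Ico (j+1) n, h t * B ^ t := by
    intro h
    rw [Finset.range_eq_Ico, ← Finset.sum_Ico_consecutive (fun t => h t * B ^ t)
      (Nat.zero_le (j+1)) hj]
    rw [Finset.range_eq_Ico]
  rw [hsplit f, hsplit g]
  have htail : ∑ t ∈ Finset.Ico (j+1) n, f t * B ^ t
      = ∑ t ∈ Finset.Ico (j+1) n, g t * B ^ t := by
    apply Finset.sum_congr rfl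
    intro t ht
    rw [Finset.mem_Ico] at ht
    rw [heq t (Nat.lt_of_succ_le ht.1) ht.2]
  rw [htail]
  have hhead : ∑ t ∈ Finset.range (j+1), f t * B ^ t
      < ∑ t ∈ Finset.range (j+1), g t * B ^ t := by
    rw [Finset.sum_range_succ, Finset.sum_range_succ]
    have h1 : ∑ t ∈ Finset.range j, f t * B ^ t < B ^ j := sum_lt_pow B f hf j
    have h2 : (f j + 1) * B ^ j ≤ g j * B ^ j :=
      Nat.mul_le_mul_right _ hlt
    have h3 : 0 ≤ ∑ t ∈ Finset.range j, g t * B ^ t := Nat.zero_le _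
    nlinarith [h1, h2, h3]
  omega

noncomputable def Nval (D : Set (Default M)) (k : ℕ) (X : Set (Default M)) : ℕ :=
  ∑ t ∈ Finset.range (k+1), tup D k X (k - t) * (D.ncard + 1) ^ t

lemma serious_lt (D : Set (Default M)) (hD : D.Finite) {k : ℕ}
    {X Y : Set (Default M)} (h : Serious D k X Y) : Nval D k X < Nval D k Y := by
  obtain ⟨j, hjk, heq, hlt⟩ := h
  apply lex_sum (D.ncard + 1) _ _
    (fun t => Nat.lt_succ_of_le (tup_le D hD k X _)) (k+1) (k - j) (by omega)
  · intro t ht1 ht2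
    exact heq (k - t) (by omega)
  · rw [Nat.sub_sub_self hjk]
    exact hlt

lemma hasRank_of_consistent (D : Set (Default M)) {b : Set M} {i : ℕ}
    (h : ConsistentWith b (Ee D i)) : ∃ j, HasRank D b j ∧ j ≤ i := by
  classical
  have hex : ∃ j, ConsistentWith b (Ee D j) := ⟨i, h⟩
  exact ⟨Nat.find hex, ⟨Nat.find_spec hex, fun j hj => Nat.find_min hex hj⟩,
    Nat.find_le h⟩

/-- If `a` has finite rank `i` and `(a,b)` belongs to the lexicographic closure of
`D`, then `b` has a rank, which is at most `i`. -/
theorem rank_of_consequent_le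
    (D : Set (Default M)) (hD : D.Finite) (k : ℕ) (hk : IsOrder D k)
    (a b : Set M) (i : ℕ) (ha : HasRank D a i) (h : LexClos D k a b) :
    ∃ j, HasRank D b j ∧ j ≤ i := by
  classical
  obtain ⟨m₀, hm₀a, hm₀i⟩ := ha.1
  -- choose a model of `a` minimizing `Nval` of its violation set
  set S : Set ℕ := {n | ∃ m ∈ a, Nval D k (Vset D m) = n} with hS
  have hSne : S.Nonempty := ⟨_, m₀, hm₀a, rfl⟩
  obtain ⟨m, hma, hmN⟩ := Nat.sInf_mem hSne
  have hmin : ∀ m' ∈ a, ¬ Serious D k (Vset D m') (Vset D m) := by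
    intro m' hm' hs
    have h1 := serious_lt D hD hs
    have h2 : Nval D k (Vset D m') ∈ S := ⟨m', hm', rfl⟩
    have h3 := Nat.sInf_le h2
    omega
  -- `m₀` violates no default of `E_i`
  have hV0 : Vset D m₀ ∩ Ee D i = ∅ := by
    apply eq_empty_iff_forall_notMem.mpr
    rintro d ⟨⟨_, hv⟩, hdE⟩
    have hmat : m₀ ∈ d.1ᶜ ∪ d.2 := by
      have := mem_iInter.mp hm₀i d
      exact mem_iInter.mp this hdE
    rcases hmat with h' | h'
    · exact h' hv.1
    · exact hv.2 h'
  have htup0 : ∀ t, (t = 0 ∨ i + t ≤ k) → tup D k (Vset D m₀) t = 0 := by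
    intro t ht
    by_cases h0 : t = 0
    · subst h0
      have he : Dinf D ∩ Vset D m₀ = ∅ := by
        apply eq_empty_iff_forall_notMem.mpr
        rintro d ⟨hd1, hd2⟩
        have : d ∈ Vset D m₀ ∩ Ee D i := ⟨hd2, mem_iInter.mp hd1 i⟩
        rw [hV0] at this; exact this
      simp [tup, he]
    · have hle : i ≤ k - t := by omega
      have he : Dlev D (k - t) ∩ Vset D m₀ = ∅ := by
        apply eq_empty_iff_forall_notMem.mpr
        rintro d ⟨hd1, hd2⟩
        have : d ∈ Vset D m₀ ∩ Ee D i := ⟨hd2, Ee_antitone D hle hd1.1⟩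
        rw [hV0] at this; exact this
      simp [tup, h0, he]
  -- the minimal model `m` violates no default of `E_i` either
  have hVm : Vset D m ∩ Ee D i = ∅ := by
    by_contra h'
    obtain ⟨d, hdV, hdE⟩ := nonempty_iff_ne_empty.mpr h'
    by_cases hdinf : ∀ n, d ∈ Ee D n
    · have hd0 : tup D k (Vset D m) 0 ≠ 0 := by
        have ht0 : tup D k (Vset D m) 0 = (Dinf D ∩ Vset D m).ncard := by simp [tup]
        rw [ht0]
        have hfin : (Dinf D ∩ Vset D m).Finite :=
          hD.subset (inter_subset_left.trans (Dinf_subset_D D))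
        have hne : (Dinf D ∩ Vset D m).Nonempty :=
          ⟨d, mem_iInter.mpr hdinf, hdV⟩
        have := (Set.ncard_pos hfin).mpr hne
        omega
      exact hmin m₀ hm₀a ⟨0, Nat.zero_le k,
        fun t ht => absurd ht (Nat.not_lt_zero t), by
          rw [htup0 0 (Or.inl rfl)]
          exact Nat.pos_of_ne_zero hd0⟩
    · push_neg at hdinf
      obtain ⟨j, hij, hdj⟩ : ∃ j, i ≤ j ∧ d ∈ Dlev D j := by
        have hn := Nat.find_spec hdinf
        have hni : i < Nat.find hdinf := by
          by_contra hcon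
          push_neg at hcon
          exact hn (Ee_antitone D hcon hdE)
        refine ⟨Nat.find hdinf - 1, by omega, ?_, ?_⟩
        · have := Nat.find_min hdinf (m := Nat.find hdinf - 1) (by omega)
          simpa using not_not.mp this
        · have : Nat.find hdinf - 1 + 1 = Nat.find hdinf := by omega
          rw [this]; exact hn
      have hjk : j < k := by
        by_contra hcon
        push_neg at hcon
        have := hk.1 j hcon
        rw [this] at hdj
        exact hdj
      have ht₀ : tup D k (Vset D m) (k - j) ≠ 0 := by
        have h1 : k - j ≠ 0 := by omega
        have h2 : k - (k - j) = j := by omega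
        have ht1 : tup D k (Vset D m) (k - j) = (Dlev D j ∩ Vset D m).ncard := by
          simp [tup, h1, h2]
        rw [ht1]
        have hfin : (Dlev D j ∩ Vset D m).Finite :=
          hD.subset (inter_subset_left.trans (Dlev_subset_D D j))
        have := (Set.ncard_pos hfin).mpr ⟨d, hdj, hdV⟩
        omega
      have hexT : ∃ t, tup D k (Vset D m) t ≠ 0 := ⟨k - j, ht₀⟩
      have hj'le : Nat.find hexT ≤ k - j := Nat.find_le ht₀
      apply hmin m₀ hm₀a
      refine ⟨Nat.find hexT, by omega, ?_, ?_⟩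
      · intro t ht
        have h1 : tup D k (Vset D m) t = 0 := not_not.mp (Nat.find_min hexT ht)
        have h2 : tup D k (Vset D m₀) t = 0 := htup0 t (by omega)
        rw [h1, h2]
      · have h2 : tup D k (Vset D m₀) (Nat.find hexT) = 0 := htup0 _ (by omega)
        have h3 := Nat.find_spec hexT
        omega
  -- hence `m` satisfies all material counterparts of `E_i`
  have hmI : m ∈ ⋂ e ∈ Ee D i, (e.1ᶜ ∪ e.2) := by
    apply mem_iInter.mpr
    intro e
    apply mem_iInter.mpr
    intro he
    by_contra hcon
    rw [mem_union, mem_compl_iff] at hcon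
    push_neg at hcon
    have hviol : Violates m e := ⟨hcon.1, hcon.2⟩
    have : e ∈ Vset D m ∩ Ee D i := ⟨⟨Ee_subset_D D i he, hviol⟩, he⟩
    rw [hVm] at this
    exact this
  have hmb : m ∈ b := h m hma hmin
  exact hasRank_of_consistent D ⟨m, hmb, hmI⟩
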